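/- Consider curves of matrices X_{1:K}(s) on s ∈ [0,1] with max_k sup_s ‖I − X_k(s)‖_op ≤ κτ where κτ ≤ 1/2 and τ > 0, and define Λ_{K+1}(s) = I, Λ_k(s) = X_k(s)ᵀΛ_{k+1}(s)X_k(s) + τI. Let Δ := 3·max{1, 2κ}·sup_{s∈[0,1]} ∑_{k=1}^K ‖X_k'(s)‖_op, and write M(s) := max_k ‖Λ_k(s)‖_op. If M(0)·Δ < 1, then M(1) ≤ (1 − M(0)Δ)^{−1} M(0). -/

import Mathlib

open Matrix Set
open scoped RealInnerProductSpace

/-- The `ℓ₂ → ℓ₂` operator norm of a real matrix. -/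
noncomputable def opNorm {m n : ℕ} (M : Matrix (Fin m) (Fin n) ℝ) : ℝ :=
  ‖LinearMap.toContinuousLinearMap (Matrix.toEuclideanLin M)‖

lemma opNorm_eq {n : ℕ} (M : Matrix (Fin n) (Fin n) ℝ) :
    opNorm M = ‖(Matrix.toEuclideanCLM (𝕜 := ℝ) M :
      EuclideanSpace ℝ (Fin n) →L[ℝ] EuclideanSpace ℝ (Fin n))‖ := rfl

lemma opNorm_nonneg {n : ℕ} (M : Matrix (Fin n) (Fin n) ℝ) : 0 ≤ opNorm M :=
  norm_nonneg _

lemma toEuclideanCLM_transpose {n : ℕ} (M : Matrix (Fin n) (Fin n) ℝ) :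
    Matrix.toEuclideanCLM (𝕜 := ℝ) Mᵀ
      = ContinuousLinearMap.adjoint (Matrix.toEuclideanCLM (𝕜 := ℝ) M) := by
  rw [← ContinuousLinearMap.star_eq_adjoint, ← map_star]
  congr 1

lemma hasDerivAt_toEuclideanCLM {n : ℕ} (f : ℝ → Matrix (Fin n) (Fin n) ℝ)
    (g : Matrix (Fin n) (Fin n) ℝ) (s : ℝ)
    (h : ∀ i j, HasDerivAt (fun r => f r i j) (g i j) s) :
    HasDerivAt (fun r => (Matrix.toEuclideanCLM (𝕜 := ℝ) (f r)))
      (Matrix.toEuclideanCLM (𝕜 := ℝ) g) s := by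
  have key : ∀ (M : Matrix (Fin n) (Fin n) ℝ),
      Matrix.toEuclideanCLM (𝕜 := ℝ) M
        = ∑ i, ∑ j, M i j • Matrix.toEuclideanCLM (𝕜 := ℝ) (Matrix.single i j 1) := by
    intro M
    conv_lhs => rw [matrix_eq_sum_single M]
    rw [map_sum]
    refine Finset.sum_congr rfl fun i _ => ?_
    rw [map_sum]
    refine Finset.sum_congr rfl fun j _ => ?_
    rw [show Matrix.single i j (M i j) = M i j • Matrix.single i j 1 by
      rw [smul_single, smul_eq_mul, mul_one], _root_.map_smul]
  rw [show (fun r => Matrix.toEuclideanCLM (𝕜 := ℝ) (f r))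
      = fun r => ∑ i, ∑ j, f r i j • Matrix.toEuclideanCLM (𝕜 := ℝ) (Matrix.single i j 1)
    from funext fun r => key (f r), key g]
  apply HasDerivAt.fun_sum
  intro i _
  apply HasDerivAt.fun_sum
  intro j _
  exact (h i j).smul_const (Matrix.toEuclideanCLM (𝕜 := ℝ) (Matrix.single i j (1:ℝ)))
lemma lyap_quad {n K : ℕ} (τ : ℝ)
    (X Λ : ℕ → ℝ → Matrix (Fin n) (Fin n) ℝ)
    (hrec : ∀ k, 1 ≤ k → k ≤ K → ∀ s,
      Λ k s = (X k s)ᵀ * Λ (k + 1) s * X k s + τ • (1 : Matrix (Fin n) (Fin n) ℝ))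
    (k : ℕ) (hk1 : 1 ≤ k) (hkK : k ≤ K) (s : ℝ) (w : EuclideanSpace ℝ (Fin n)) :
    ⟪Matrix.toEuclideanCLM (𝕜 := ℝ) (Λ k s) w, w⟫
      = ⟪Matrix.toEuclideanCLM (𝕜 := ℝ) (Λ (k+1) s) (Matrix.toEuclideanCLM (𝕜 := ℝ) (X k s) w),
          Matrix.toEuclideanCLM (𝕜 := ℝ) (X k s) w⟫ + τ * ‖w‖^2 := by
  rw [hrec k hk1 hkK s, map_add, _root_.map_mul, _root_.map_mul, toEuclideanCLM_transpose,
    _root_.map_smul, _root_.map_one]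
  simp only [ContinuousLinearMap.add_apply, ContinuousLinearMap.mul_apply,
    ContinuousLinearMap.smul_apply, ContinuousLinearMap.one_apply, inner_add_left,
    real_inner_smul_left, ContinuousLinearMap.adjoint_inner_left, real_inner_self_eq_norm_sq]

lemma lyap_lower {n K : ℕ} (τ κ : ℝ) (hτ : 0 < τ) (hκ : 0 < κ) (hκτ : κ * τ ≤ 1 / 2)
    (X Λ : ℕ → ℝ → Matrix (Fin n) (Fin n) ℝ)
    (hX : ∀ k, 1 ≤ k → k ≤ K → ∀ s ∈ Icc (0:ℝ) 1, opNorm (1 - X k s) ≤ κ * τ)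
    (hΛtop : ∀ s, Λ (K + 1) s = 1)
    (hrec : ∀ k, 1 ≤ k → k ≤ K → ∀ s,
      Λ k s = (X k s)ᵀ * Λ (k + 1) s * X k s + τ • (1 : Matrix (Fin n) (Fin n) ℝ)) :
    ∀ d k, k + d = K + 1 → 1 ≤ k → ∀ s ∈ Icc (0:ℝ) 1, ∀ v : EuclideanSpace ℝ (Fin n),
      min 1 (2*κ)⁻¹ * ‖v‖^2 ≤ ⟪Matrix.toEuclideanCLM (𝕜 := ℝ) (Λ k s) v, v⟫ := by
  have h2κ : (0:ℝ) < 2*κ := by linarith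
  have hc0 : 0 < min 1 (2*κ)⁻¹ := lt_min one_pos (by positivity)
  have hcκ : 2*κ*(min 1 (2*κ)⁻¹) ≤ 1 := by
    calc 2*κ*(min 1 (2*κ)⁻¹) ≤ 2*κ*(2*κ)⁻¹ :=
      mul_le_mul_of_nonneg_left (min_le_right _ _) (le_of_lt h2κ)
    _ = 1 := mul_inv_cancel₀ (ne_of_gt h2κ)
  have hc1 : min 1 (2*κ)⁻¹ ≤ 1 := min_le_left _ _
  intro d
  induction d with
  | zero =>
    intro k hk _ s _ v
    have hkeq : k = K + 1 := by omega
    subst hkeq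
    rw [hΛtop, _root_.map_one]
    simp only [ContinuousLinearMap.one_apply, real_inner_self_eq_norm_sq]
    nlinarith [sq_nonneg ‖v‖]
  | succ d ih =>
    intro k hk hk1 s hs v
    have hkK : k ≤ K := by omega
    set Y := Matrix.toEuclideanCLM (𝕜 := ℝ) (X k s) with hY
    have h1 := lyap_quad τ X Λ hrec k hk1 hkK s v
    have h2 := ih (k+1) (by omega) (by omega) s hs (Y v)
    have h3 : ‖v - Y v‖ ≤ κ*τ * ‖v‖ := by
      have e : v - Y v = Matrix.toEuclideanCLM (𝕜 := ℝ) (1 - X k s) v := by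
        rw [map_sub, _root_.map_one, ContinuousLinearMap.sub_apply,
          ContinuousLinearMap.one_apply]
      rw [e]
      have hb : ‖(Matrix.toEuclideanCLM (𝕜 := ℝ) (1 - X k s) :
          EuclideanSpace ℝ (Fin n) →L[ℝ] EuclideanSpace ℝ (Fin n))‖ ≤ κ*τ := by
        rw [← opNorm_eq]; exact hX k hk1 hkK s hs
      exact le_trans (ContinuousLinearMap.le_opNorm _ _)
        (mul_le_mul_of_nonneg_right hb (norm_nonneg v))
    have h4 : (1 - κ*τ) * ‖v‖ ≤ ‖Y v‖ := by
      have h5 : ‖v‖ - ‖Y v‖ ≤ κ*τ*‖v‖ := le_trans (norm_sub_norm_le v (Y v)) h3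
      linarith
    have h6 : ((1 - κ*τ) * ‖v‖)^2 ≤ ‖Y v‖^2 := by
      apply sq_le_sq' _ h4
      nlinarith [norm_nonneg v, norm_nonneg (Y v)]
    rw [h1]
    have hκτ0 : 0 < κ * τ := by positivity
    have h7 : min 1 (2*κ)⁻¹ * ((1 - κ*τ) * ‖v‖)^2 ≤ min 1 (2*κ)⁻¹ * ‖Y v‖^2 :=
      mul_le_mul_of_nonneg_left h6 (le_of_lt hc0)
    have h8 : 2*κ*(min 1 (2*κ)⁻¹) * τ ≤ τ :=
      le_trans (mul_le_mul_of_nonneg_right hcκ (le_of_lt hτ)) (by linarith)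
    nlinarith [sq_nonneg ‖v‖, h2, h7, h8, hκτ0,
      mul_nonneg (mul_nonneg (le_of_lt hc0) (sq_nonneg (κ*τ))) (sq_nonneg ‖v‖)]
lemma mul_le_mul4 {a b c d a' b' c' d' : ℝ} (ha : a ≤ a') (hb : b ≤ b') (hc : c ≤ c')
    (hd : d ≤ d') (hb0 : 0 ≤ b) (hc0 : 0 ≤ c) (hd0 : 0 ≤ d)
    (ha'0 : 0 ≤ a') (hb'0 : 0 ≤ b') (hc'0 : 0 ≤ c') : a*b*c*d ≤ a'*b'*c'*d' := by
  have h1 : a*b ≤ a'*b' := mul_le_mul ha hb hb0 ha'0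
  have h2 : a*b*c ≤ a'*b'*c' := mul_le_mul h1 hc hc0 (mul_nonneg ha'0 hb'0)
  exact mul_le_mul h2 hd hd0 (mul_nonneg (mul_nonneg ha'0 hb'0) hc'0)

lemma norm_comp4_le {n : ℕ} (a b c d :
    EuclideanSpace ℝ (Fin n) →L[ℝ] EuclideanSpace ℝ (Fin n)) :
    ‖a ∘L b ∘L c ∘L d‖ ≤ ‖a‖ * ‖b‖ * ‖c‖ * ‖d‖ := by
  calc ‖a ∘L b ∘L c ∘L d‖ ≤ ‖a‖ * ‖b ∘L c ∘L d‖ := ContinuousLinearMap.opNorm_comp_le _ _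
    _ ≤ ‖a‖ * (‖b‖ * ‖c ∘L d‖) := by
        exact mul_le_mul_of_nonneg_left (ContinuousLinearMap.opNorm_comp_le _ _) (norm_nonneg _)
    _ ≤ ‖a‖ * (‖b‖ * (‖c‖ * ‖d‖)) := by
        refine mul_le_mul_of_nonneg_left ?_ (norm_nonneg _)
        exact mul_le_mul_of_nonneg_left (ContinuousLinearMap.opNorm_comp_le _ _) (norm_nonneg _)
    _ = ‖a‖ * ‖b‖ * ‖c‖ * ‖d‖ := by ring

set_option maxHeartbeats 1600000 in
lemma lyap_deriv {n K : ℕ} (τ κ : ℝ) (hτ : 0 < τ) (hκ : 0 < κ) (hκτ : κ * τ ≤ 1 / 2)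
    (X X' Λ : ℕ → ℝ → Matrix (Fin n) (Fin n) ℝ)
    (hX : ∀ k, 1 ≤ k → k ≤ K → ∀ s ∈ Icc (0:ℝ) 1, opNorm (1 - X k s) ≤ κ * τ)
    (hX' : ∀ k, 1 ≤ k → k ≤ K → ∀ s ∈ Icc (0:ℝ) 1, ∀ i j,
      HasDerivAt (fun r => X k r i j) (X' k s i j) s)
    (hΛtop : ∀ s, Λ (K + 1) s = 1)
    (hrec : ∀ k, 1 ≤ k → k ≤ K → ∀ s,
      Λ k s = (X k s)ᵀ * Λ (k + 1) s * X k s + τ • (1 : Matrix (Fin n) (Fin n) ℝ))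
    (Ms : ℝ → ℝ)
    (hMs : ∀ k, 1 ≤ k → k ≤ K + 1 → ∀ s ∈ Icc (0:ℝ) 1, opNorm (Λ k s) ≤ Ms s) :
    ∀ d k, k + d = K + 1 → 1 ≤ k → ∀ s ∈ Icc (0:ℝ) 1,
      ∃ D : EuclideanSpace ℝ (Fin n) →L[ℝ] EuclideanSpace ℝ (Fin n),
        HasDerivAt (fun r => Matrix.toEuclideanCLM (𝕜 := ℝ) (Λ k r)) D s ∧
        ∀ (R : EuclideanSpace ℝ (Fin n) →L[ℝ] EuclideanSpace ℝ (Fin n)) (q : ℝ), 0 ≤ q →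
          (∀ v, ⟪Matrix.toEuclideanCLM (𝕜 := ℝ) (Λ k s) (R v), R v⟫ ≤ q * ‖v‖ ^ 2) →
          ‖ContinuousLinearMap.adjoint R ∘L D ∘L R‖ ≤
            3 * max 1 (2 * κ) * Ms s * q * ∑ j ∈ Finset.Icc k K, opNorm (X' j s) := by
  have h2κ : (0:ℝ) < 2 * κ := by linarith
  set c : ℝ := min 1 (2 * κ)⁻¹ with hcdef
  have hc0 : 0 < c := lt_min one_pos (by positivity)
  have hcmax : c⁻¹ = max 1 (2 * κ) := by
    rcases le_total 1 (2 * κ) with h | h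
    · have h1 : (2 * κ)⁻¹ ≤ 1 := by
        nlinarith [inv_pos.mpr h2κ, mul_inv_cancel₀ (ne_of_gt h2κ)]
      rw [hcdef, min_eq_right h1, inv_inv, max_eq_right h]
    · have h1 : (1:ℝ) ≤ (2 * κ)⁻¹ := by
        nlinarith [inv_pos.mpr h2κ, mul_inv_cancel₀ (ne_of_gt h2κ)]
      rw [hcdef, min_eq_left h1, inv_one, max_eq_left h]
  intro d
  induction d with
  | zero =>
    intro k hk hk1 s hs
    have hkeq : k = K + 1 := by omega
    subst hkeq
    refine ⟨0, ?_, ?_⟩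
    · rw [show (fun r => Matrix.toEuclideanCLM (𝕜 := ℝ) (Λ (K+1) r))
          = fun _ => (1 : EuclideanSpace ℝ (Fin n) →L[ℝ] EuclideanSpace ℝ (Fin n))
        from funext fun r => by rw [hΛtop, _root_.map_one]]
      exact hasDerivAt_const _ _
    · intro R q hq hQ
      rw [Finset.Icc_eq_empty (by omega)]
      simp only [Finset.sum_empty, mul_zero, ContinuousLinearMap.comp_zero,
        ContinuousLinearMap.zero_comp, norm_zero, le_refl]
  | succ d ih =>
    intro k hk hk1 s hs
    have hkK : k ≤ K := by omega
    obtain ⟨D₁, hD₁, hB₁⟩ := ih (k+1) (by omega) (by omega) s hs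
    set Y := Matrix.toEuclideanCLM (𝕜 := ℝ) (X k s) with hYdef
    set Y' := Matrix.toEuclideanCLM (𝕜 := ℝ) (X' k s) with hY'def
    set A1 := Matrix.toEuclideanCLM (𝕜 := ℝ) (Λ (k+1) s) with hA1def
    have hYd : HasDerivAt (fun r => Matrix.toEuclideanCLM (𝕜 := ℝ) (X k r)) Y' s :=
      hasDerivAt_toEuclideanCLM _ _ _ (fun i j => hX' k hk1 hkK s hs i j)
    have hYtd : HasDerivAt (fun r => Matrix.toEuclideanCLM (𝕜 := ℝ) ((X k r)ᵀ))
        (Matrix.toEuclideanCLM (𝕜 := ℝ) ((X' k s)ᵀ)) s := by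
      apply hasDerivAt_toEuclideanCLM
      intro i j
      simpa using hX' k hk1 hkK s hs j i
    have hfun : (fun r => Matrix.toEuclideanCLM (𝕜 := ℝ) (Λ k r))
        = fun r => (Matrix.toEuclideanCLM (𝕜 := ℝ) ((X k r)ᵀ)) ∘L
            ((Matrix.toEuclideanCLM (𝕜 := ℝ) (Λ (k+1) r)) ∘L
              (Matrix.toEuclideanCLM (𝕜 := ℝ) (X k r))) + τ • 1 := by
      funext r
      rw [hrec k hk1 hkK r, map_add, _root_.map_mul, _root_.map_mul, _root_.map_smul,
        _root_.map_one, mul_assoc, ContinuousLinearMap.mul_def, ContinuousLinearMap.mul_def]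
    refine ⟨(Matrix.toEuclideanCLM (𝕜 := ℝ) ((X' k s)ᵀ)) ∘L (A1 ∘L Y) +
        (Matrix.toEuclideanCLM (𝕜 := ℝ) ((X k s)ᵀ)) ∘L (D₁ ∘L Y + A1 ∘L Y'), ?_, ?_⟩
    · rw [hfun]
      exact (hYtd.clm_comp (hD₁.clm_comp hYd)).add_const _
    · intro R q hq hQ
      have hMs0 : 0 ≤ Ms s := le_trans (opNorm_nonneg _) (hMs 1 le_rfl (by omega) s hs)
      set S := Y ∘L R with hSdef
      -- quadratic form bound for S at level k+1
      have hQS : ∀ v, ⟪Matrix.toEuclideanCLM (𝕜 := ℝ) (Λ (k+1) s) (S v), S v⟫ ≤ q * ‖v‖ ^ 2 := by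
        intro v
        have h1 := lyap_quad τ X Λ hrec k hk1 hkK s (R v)
        have h2 := hQ v
        have h3 : (0:ℝ) ≤ τ * ‖R v‖ ^ 2 := by positivity
        have hSv : S v = Y (R v) := rfl
        rw [hSv]
        linarith [h1, h2, h3]
      -- norm bounds via sqrt
      have sqrt_bound : ∀ (T : EuclideanSpace ℝ (Fin n) →L[ℝ] EuclideanSpace ℝ (Fin n)),
          (∀ v, c * ‖T v‖ ^ 2 ≤ q * ‖v‖ ^ 2) → ‖T‖ ≤ Real.sqrt (q / c) := by
        intro T hT
        apply ContinuousLinearMap.opNorm_le_bound _ (Real.sqrt_nonneg _)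
        intro v
        have h := hT v
        have h1 : ‖T v‖ ^ 2 ≤ (q / c) * ‖v‖ ^ 2 := by
          rw [div_mul_eq_mul_div, le_div_iff₀ hc0]
          nlinarith
        have h2 : ‖T v‖ ≤ Real.sqrt ((q / c) * ‖v‖ ^ 2) := by
          rw [← Real.sqrt_sq (norm_nonneg (T v))]
          exact Real.sqrt_le_sqrt h1
        rwa [Real.sqrt_mul (by positivity) , Real.sqrt_sq (norm_nonneg v)] at h2
      have hRn : ‖R‖ ≤ Real.sqrt (q / c) := by
        apply sqrt_bound
        intro v
        exact le_trans (lyap_lower τ κ hτ hκ hκτ X Λ hX hΛtop hrec (K + 1 - k) k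
          (by omega) hk1 s hs (R v)) (hQ v)
      have hSn : ‖S‖ ≤ Real.sqrt (q / c) := by
        apply sqrt_bound
        intro v
        exact le_trans (lyap_lower τ κ hτ hκ hκτ X Λ hX hΛtop hrec (K - k) (k + 1)
          (by omega) (by omega) s hs (S v)) (hQS v)
      have hA1n : ‖A1‖ ≤ Ms s := by
        rw [hA1def, ← opNorm_eq]
        exact hMs (k+1) (by omega) (by omega) s hs
      have hY'n : ‖Y'‖ = opNorm (X' k s) := by rw [hY'def]; exact (opNorm_eq _).symm
      have hYt : Matrix.toEuclideanCLM (𝕜 := ℝ) ((X k s)ᵀ) = ContinuousLinearMap.adjoint Y :=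
        toEuclideanCLM_transpose _
      have hY't : Matrix.toEuclideanCLM (𝕜 := ℝ) ((X' k s)ᵀ) = ContinuousLinearMap.adjoint Y' :=
        toEuclideanCLM_transpose _
      set T1 := ContinuousLinearMap.adjoint R ∘L ContinuousLinearMap.adjoint Y' ∘L A1 ∘L S
        with hT1def
      set T2 := ContinuousLinearMap.adjoint S ∘L D₁ ∘L S with hT2def
      set T3 := ContinuousLinearMap.adjoint S ∘L A1 ∘L Y' ∘L R with hT3def
      have hsplit : ContinuousLinearMap.adjoint R ∘L
          ((Matrix.toEuclideanCLM (𝕜 := ℝ) ((X' k s)ᵀ)) ∘L (A1 ∘L Y) +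
            (Matrix.toEuclideanCLM (𝕜 := ℝ) ((X k s)ᵀ)) ∘L (D₁ ∘L Y + A1 ∘L Y')) ∘L R
          = T1 + T2 + T3 := by
        rw [hYt, hY't, hT1def, hT2def, hT3def, hSdef, ContinuousLinearMap.adjoint_comp]
        ext v
        simp [ContinuousLinearMap.comp_apply, ContinuousLinearMap.add_apply, map_add]
        ring
      rw [hsplit]
      have hsq : Real.sqrt (q / c) * Real.sqrt (q / c) = q / c :=
        Real.mul_self_sqrt (by positivity)
      have hqc : q / c = q * max 1 (2 * κ) := by rw [div_eq_mul_inv, hcmax]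
      have hopX' : 0 ≤ opNorm (X' k s) := opNorm_nonneg _
      have ht1 : ‖T1‖ ≤ Real.sqrt (q / c) * opNorm (X' k s) * Ms s * Real.sqrt (q / c) := by
        refine le_trans (norm_comp4_le _ _ _ _) ?_
        rw [LinearIsometryEquiv.norm_map, LinearIsometryEquiv.norm_map, hY'n]
        exact mul_le_mul4 hRn le_rfl hA1n hSn hopX' (norm_nonneg _) (norm_nonneg _)
          (Real.sqrt_nonneg _) hopX' hMs0
      have ht3 : ‖T3‖ ≤ Real.sqrt (q / c) * Ms s * opNorm (X' k s) * Real.sqrt (q / c) := by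
        refine le_trans (norm_comp4_le _ _ _ _) ?_
        rw [LinearIsometryEquiv.norm_map, hY'n]
        exact mul_le_mul4 hSn hA1n le_rfl hRn (norm_nonneg _) hopX' (norm_nonneg _)
          (Real.sqrt_nonneg _) hMs0 hopX'
      have ht2 : ‖T2‖ ≤ 3 * max 1 (2 * κ) * Ms s * q *
          ∑ j ∈ Finset.Icc (k+1) K, opNorm (X' j s) := hB₁ S q hq hQS
      have hsum : ∑ j ∈ Finset.Icc k K, opNorm (X' j s)
          = opNorm (X' k s) + ∑ j ∈ Finset.Icc (k+1) K, opNorm (X' j s) := by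
        rw [show Finset.Icc k K = insert k (Finset.Icc (k+1) K) by
          ext a; simp only [Finset.mem_Icc, Finset.mem_insert]; omega]
        rw [Finset.sum_insert (by simp only [Finset.mem_Icc]; omega)]
      have hsum0 : 0 ≤ ∑ j ∈ Finset.Icc (k+1) K, opNorm (X' j s) :=
        Finset.sum_nonneg fun j _ => opNorm_nonneg _
      have hmax1 : (1:ℝ) ≤ max 1 (2 * κ) := le_max_left _ _
      have e1 : Real.sqrt (q / c) * opNorm (X' k s) * Ms s * Real.sqrt (q / c)
          = q * max 1 (2 * κ) * opNorm (X' k s) * Ms s := by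
        have h := hsq.trans hqc
        linear_combination (opNorm (X' k s) * Ms s) * h
      have e3 : Real.sqrt (q / c) * Ms s * opNorm (X' k s) * Real.sqrt (q / c)
          = q * max 1 (2 * κ) * opNorm (X' k s) * Ms s := by
        have h := hsq.trans hqc
        linear_combination (opNorm (X' k s) * Ms s) * h
      have hP0 : 0 ≤ q * max 1 (2 * κ) * opNorm (X' k s) * Ms s := by
        have : (0:ℝ) ≤ max 1 (2 * κ) := by linarith
        exact mul_nonneg (mul_nonneg (mul_nonneg hq this) hopX') hMs0
      calc ‖T1 + T2 + T3‖ ≤ ‖T1‖ + ‖T2‖ + ‖T3‖ :=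
            le_trans (norm_add_le _ _) (by linarith [norm_add_le T1 T2])
        _ ≤ q * max 1 (2 * κ) * opNorm (X' k s) * Ms s
              + 3 * max 1 (2 * κ) * Ms s * q * ∑ j ∈ Finset.Icc (k+1) K, opNorm (X' j s)
              + q * max 1 (2 * κ) * opNorm (X' k s) * Ms s := by
            rw [e1] at ht1
            rw [e3] at ht3
            linarith
        _ ≤ 3 * max 1 (2 * κ) * Ms s * q *
              (opNorm (X' k s) + ∑ j ∈ Finset.Icc (k+1) K, opNorm (X' j s)) := by
            nlinarith [hP0]
        _ = 3 * max 1 (2 * κ) * Ms s * q * ∑ j ∈ Finset.Icc k K, opNorm (X' j s) := by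
            rw [hsum]

set_option maxHeartbeats 1600000 in
/-- Average perturbation of Lyapunov solutions: for C¹ curves `X_k(s)` with
`‖I − X_k(s)‖_op ≤ κτ ≤ 1/2`, the Lyapunov recursion `Λ_{K+1}(s) = I`,
`Λ_k(s) = X_k(s)ᵀ Λ_{k+1}(s) X_k(s) + τ I`, and
`Δ ≥ 3 max{1, 2κ} sup_s ∑_k ‖X_k'(s)‖_op`, writing `M(s) = max_k ‖Λ_k(s)‖_op`:
if `M(0)Δ < 1` then `M(1) ≤ (1 − M(0)Δ)⁻¹ M(0)`. -/
theorem lyapunov_average_perturbation {n K : ℕ}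
    (τ κ Δ : ℝ) (hτ : 0 < τ) (hκ : 0 < κ) (hκτ : κ * τ ≤ 1 / 2)
    (X X' : ℕ → ℝ → Matrix (Fin n) (Fin n) ℝ)
    (Λ : ℕ → ℝ → Matrix (Fin n) (Fin n) ℝ)
    (hX : ∀ k, 1 ≤ k → k ≤ K → ∀ s ∈ Icc (0:ℝ) 1, opNorm (1 - X k s) ≤ κ * τ)
    (hX' : ∀ k, 1 ≤ k → k ≤ K → ∀ s ∈ Icc (0:ℝ) 1, ∀ i j,
      HasDerivAt (fun r => X k r i j) (X' k s i j) s)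
    (hΛtop : ∀ s, Λ (K + 1) s = 1)
    (hrec : ∀ k, 1 ≤ k → k ≤ K → ∀ s,
      Λ k s = (X k s)ᵀ * Λ (k + 1) s * X k s + τ • (1 : Matrix (Fin n) (Fin n) ℝ))
    (hΔ : ∀ s ∈ Icc (0:ℝ) 1,
      3 * max 1 (2 * κ) * ∑ k ∈ Finset.Icc 1 K, opNorm (X' k s) ≤ Δ)
    (hsmall :
      ((Finset.Icc 1 (K + 1)).sup' (Finset.nonempty_Icc.mpr (by omega))
        fun k => opNorm (Λ k 0)) * Δ < 1) :
    ((Finset.Icc 1 (K + 1)).sup' (Finset.nonempty_Icc.mpr (by omega))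
        fun k => opNorm (Λ k 1))
      ≤ (1 - ((Finset.Icc 1 (K + 1)).sup' (Finset.nonempty_Icc.mpr (by omega))
            fun k => opNorm (Λ k 0)) * Δ)⁻¹
        * ((Finset.Icc 1 (K + 1)).sup' (Finset.nonempty_Icc.mpr (by omega))
            fun k => opNorm (Λ k 0)) := by
  classical
  have hne : (Finset.Icc 1 (K+1)).Nonempty := Finset.nonempty_Icc.mpr (by omega)
  rcases Nat.eq_zero_or_pos n with hn | hn
  · -- trivial case n = 0
    subst hn
    have h0 : ∀ (M : Matrix (Fin 0) (Fin 0) ℝ), opNorm M = 0 := by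
      intro M
      refine le_antisymm ?_ (opNorm_nonneg M)
      rw [opNorm_eq]
      refine ContinuousLinearMap.opNorm_le_bound _ le_rfl ?_
      intro v
      have : ‖(Matrix.toEuclideanCLM (𝕜 := ℝ) M) v‖ = 0 := by
        simp [EuclideanSpace.norm_eq]
      rw [this]
      positivity
    have key : ∀ (h : (Finset.Icc 1 (K+1)).Nonempty) (s : ℝ),
        (Finset.Icc 1 (K+1)).sup' h (fun k => opNorm (Λ k s)) = 0 := by
      intro h s
      refine le_antisymm (Finset.sup'_le _ _ fun k _ => le_of_eq (h0 _)) ?_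
      refine le_trans (le_of_eq (h0 (Λ 1 s)).symm) (Finset.le_sup' (fun k => opNorm (Λ k s)) ?_)
      exact Finset.mem_Icc.mpr ⟨le_rfl, by omega⟩
    rw [key, key]
    simp
  · -- main case n ≥ 1
    set Ms : ℝ → ℝ :=
      fun s => (Finset.Icc 1 (K+1)).sup' hne (fun k => opNorm (Λ k s)) with hMsdef
    have hMs : ∀ k, 1 ≤ k → k ≤ K + 1 → ∀ s ∈ Icc (0:ℝ) 1, opNorm (Λ k s) ≤ Ms s :=
      fun k h1 h2 s _ => Finset.le_sup' (fun j => opNorm (Λ j s)) (Finset.mem_Icc.mpr ⟨h1, h2⟩)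
    have hMs0 : ∀ s, 0 ≤ Ms s := fun s =>
      le_trans (opNorm_nonneg (Λ 1 s)) (Finset.le_sup' (fun j => opNorm (Λ j s)) (Finset.mem_Icc.mpr ⟨le_rfl, by omega⟩))
    have hv : (EuclideanSpace.single (⟨0, hn⟩ : Fin n) (1:ℝ)) ≠ 0 := by
      intro h
      have := congrArg (fun v => v ⟨0, hn⟩) h
      simp [EuclideanSpace.single_apply] at this
    haveI : Nontrivial (EuclideanSpace ℝ (Fin n)) := ⟨⟨_, 0, hv⟩⟩
    have hm1 : 1 ≤ Ms 0 := by
      have h1 : opNorm (Λ (K+1) 0) = 1 := by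
        rw [opNorm_eq, hΛtop, _root_.map_one, ContinuousLinearMap.one_def,
          ContinuousLinearMap.norm_id]
      exact le_trans (le_of_eq h1.symm) (Finset.le_sup' (fun j => opNorm (Λ j 0)) (Finset.mem_Icc.mpr ⟨by omega, le_rfl⟩))
    have hm0 : 0 < Ms 0 := lt_of_lt_of_le one_pos hm1
    have hsm : Ms 0 * Δ < 1 := hsmall
    have hmax0 : (0:ℝ) ≤ max 1 (2*κ) := le_trans zero_le_one (le_max_left _ _)
    have hΔ0 : 0 ≤ Δ := by
      refine le_trans ?_ (hΔ 0 ⟨le_rfl, zero_le_one⟩)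
      exact mul_nonneg (by linarith) (Finset.sum_nonneg fun j _ => opNorm_nonneg _)
    -- choose derivatives
    have hkey : ∀ k s, ∃ D : EuclideanSpace ℝ (Fin n) →L[ℝ] EuclideanSpace ℝ (Fin n),
        1 ≤ k → k ≤ K+1 → s ∈ Icc (0:ℝ) 1 →
        HasDerivAt (fun r => Matrix.toEuclideanCLM (𝕜 := ℝ) (Λ k r)) D s ∧
          ‖D‖ ≤ Δ * (Ms s)^2 := by
      intro k s
      by_cases h : 1 ≤ k ∧ k ≤ K+1 ∧ s ∈ Icc (0:ℝ) 1
      · obtain ⟨h1, h2, h3⟩ := h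
        obtain ⟨D, hd, hb⟩ := lyap_deriv τ κ hτ hκ hκτ X X' Λ hX hX' hΛtop hrec Ms hMs
          (K+1-k) k (by omega) h1 s h3
        refine ⟨D, fun _ _ _ => ⟨hd, ?_⟩⟩
        have hq1 : ∀ v, ⟪Matrix.toEuclideanCLM (𝕜 := ℝ) (Λ k s)
            ((1 : EuclideanSpace ℝ (Fin n) →L[ℝ] EuclideanSpace ℝ (Fin n)) v),
            (1 : EuclideanSpace ℝ (Fin n) →L[ℝ] EuclideanSpace ℝ (Fin n)) v⟫
              ≤ Ms s * ‖v‖^2 := by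
          intro v
          simp only [ContinuousLinearMap.one_apply]
          refine le_trans (real_inner_le_norm _ _) ?_
          have hle := ContinuousLinearMap.le_opNorm (Matrix.toEuclideanCLM (𝕜 := ℝ) (Λ k s)) v
          have hMn : ‖(Matrix.toEuclideanCLM (𝕜 := ℝ) (Λ k s) :
              EuclideanSpace ℝ (Fin n) →L[ℝ] EuclideanSpace ℝ (Fin n))‖ ≤ Ms s := by
            rw [← opNorm_eq]; exact hMs k h1 h2 s h3
          nlinarith [norm_nonneg v, norm_nonneg (Matrix.toEuclideanCLM (𝕜 := ℝ) (Λ k s) v)]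
        have hb1 := hb 1 (Ms s) (hMs0 s) hq1
        have hD1 : ContinuousLinearMap.adjoint
            (1 : EuclideanSpace ℝ (Fin n) →L[ℝ] EuclideanSpace ℝ (Fin n)) ∘L D ∘L 1 = D := by
          ext w
          simp [ContinuousLinearMap.comp_apply]
          rw [← ContinuousLinearMap.star_eq_adjoint, star_one]
          rfl
        rw [hD1] at hb1
        have hss : ∑ j ∈ Finset.Icc k K, opNorm (X' j s)
            ≤ ∑ j ∈ Finset.Icc 1 K, opNorm (X' j s) :=
          Finset.sum_le_sum_of_subset_of_nonneg
            (Finset.Icc_subset_Icc h1 le_rfl) (fun i _ _ => opNorm_nonneg _)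
        have hcoef : (0:ℝ) ≤ 3 * max 1 (2*κ) * Ms s * Ms s :=
          mul_nonneg (mul_nonneg (mul_nonneg (by norm_num) hmax0) (hMs0 s)) (hMs0 s)
        calc ‖D‖ ≤ 3 * max 1 (2*κ) * Ms s * Ms s * ∑ j ∈ Finset.Icc k K, opNorm (X' j s) := hb1
          _ ≤ 3 * max 1 (2*κ) * Ms s * Ms s * ∑ j ∈ Finset.Icc 1 K, opNorm (X' j s) :=
              mul_le_mul_of_nonneg_left hss hcoef
          _ = (Ms s)^2 * (3 * max 1 (2*κ) * ∑ j ∈ Finset.Icc 1 K, opNorm (X' j s)) := by ring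
          _ ≤ (Ms s)^2 * Δ := mul_le_mul_of_nonneg_left (hΔ s h3) (sq_nonneg _)
          _ = Δ * (Ms s)^2 := by ring
      · exact ⟨0, fun h1 h2 h3 => absurd ⟨h1, h2, h3⟩ h⟩
    choose D hD using hkey
    -- the vector-valued curve
    set f : ℝ → (Fin (K+1) → (EuclideanSpace ℝ (Fin n) →L[ℝ] EuclideanSpace ℝ (Fin n))) :=
      fun s i => Matrix.toEuclideanCLM (𝕜 := ℝ) (Λ ((i:ℕ)+1) s) with hfdef
    set f' : ℝ → (Fin (K+1) → (EuclideanSpace ℝ (Fin n) →L[ℝ] EuclideanSpace ℝ (Fin n))) :=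
      fun s i => D ((i:ℕ)+1) s with hf'def
    have hDi : ∀ x ∈ Icc (0:ℝ) 1, ∀ i : Fin (K+1),
        HasDerivAt (fun r => Matrix.toEuclideanCLM (𝕜 := ℝ) (Λ ((i:ℕ)+1) r)) (D ((i:ℕ)+1) x) x ∧
          ‖D ((i:ℕ)+1) x‖ ≤ Δ * (Ms x)^2 := by
      intro x hx i
      exact hD ((i:ℕ)+1) x (by omega) (Nat.succ_le_succ (Nat.lt_succ_iff.mp i.isLt)) hx
    have hMle : ∀ x : ℝ, Ms x ≤ ‖f x‖ := by
      intro x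
      refine Finset.sup'_le _ _ ?_
      intro k hk
      rw [Finset.mem_Icc] at hk
      have hkk : k - 1 < K + 1 := by omega
      have he : opNorm (Λ k x) = ‖f x ⟨k-1, hkk⟩‖ := by
        simp only [hfdef]
        rw [show (k-1)+1 = k from by omega]
        exact opNorm_eq _
      rw [he]
      exact norm_le_pi_norm (f x) _
    have hcont : ContinuousOn f (Icc 0 1) := by
      rw [continuousOn_pi]
      intro i x hx
      exact ((hDi x hx i).1.continuousAt).continuousWithinAt
    have hfd : ∀ x ∈ Ico (0:ℝ) 1, HasDerivWithinAt f (f' x) (Ici x) x := by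
      intro x hx
      exact (hasDerivAt_pi.mpr fun i => (hDi x ⟨hx.1, hx.2.le⟩ i).1).hasDerivWithinAt
    have hf'le : ∀ x ∈ Icc (0:ℝ) 1, ‖f' x‖ ≤ Δ * (Ms x)^2 := by
      intro x hx
      have h0 : (0:ℝ) ≤ Δ * (Ms x)^2 := mul_nonneg hΔ0 (sq_nonneg _)
      rw [pi_norm_le_iff_of_nonneg h0]
      intro i
      exact (hDi x hx i).2
    -- the key ε-claim
    have claim : ∀ ε : ℝ, 0 < ε → Ms 0 * (Δ + ε) < 1 →
        Ms 1 ≤ Ms 0 * (1 - Ms 0 * (Δ + ε))⁻¹ := by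
      intro ε hε hlt
      have hδ0 : 0 < Δ + ε := by linarith
      have hu : ∀ x ∈ Icc (0:ℝ) 1, 0 < 1 - Ms 0 * (Δ + ε) * x := by
        intro x hx
        have h1 : Ms 0 * (Δ + ε) * x ≤ Ms 0 * (Δ + ε) := by
          nlinarith [mul_nonneg (mul_nonneg hm0.le hδ0.le) (sub_nonneg.mpr hx.2)]
        linarith
      have hB' : ∀ x ∈ Ico (0:ℝ) 1,
          HasDerivAt (fun x : ℝ => Ms 0 * (1 - Ms 0 * (Δ + ε) * x)⁻¹)
            ((Δ + ε) * (Ms 0 * (1 - Ms 0 * (Δ + ε) * x)⁻¹)^2) x := by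
        intro x hx
        have hux : 1 - Ms 0 * (Δ + ε) * x ≠ 0 := ne_of_gt (hu x ⟨hx.1, hx.2.le⟩)
        have h1 : HasDerivAt (fun x : ℝ => 1 - Ms 0 * (Δ + ε) * x) (-(Ms 0 * (Δ + ε))) x := by
          simpa using ((hasDerivAt_id x).const_mul (Ms 0 * (Δ + ε))).const_sub 1
        have h2 := (h1.inv hux).const_mul (Ms 0)
        refine h2.congr_deriv ?_
        field_simp
      have hBcont : ContinuousOn (fun x : ℝ => Ms 0 * (1 - Ms 0 * (Δ + ε) * x)⁻¹) (Icc 0 1) := by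
        refine continuousOn_const.mul (ContinuousOn.inv₀ (by fun_prop) ?_)
        intro x hx
        exact ne_of_gt (hu x hx)
      have ha : ‖f 0‖ ≤ Ms 0 * (1 - Ms 0 * (Δ + ε) * 0)⁻¹ := by
        have he : Ms 0 * (1 - Ms 0 * (Δ + ε) * 0)⁻¹ = Ms 0 := by norm_num
        rw [he, pi_norm_le_iff_of_nonneg (hMs0 0)]
        intro i
        have : ‖f 0 i‖ = opNorm (Λ ((i:ℕ)+1) 0) := (opNorm_eq _).symm
        rw [this]
        exact hMs ((i:ℕ)+1) (by omega) (Nat.succ_le_succ (Nat.lt_succ_iff.mp i.isLt)) 0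
          ⟨le_rfl, zero_le_one⟩
      have bound : ∀ x ∈ Ico (0:ℝ) 1, ‖f x‖ = Ms 0 * (1 - Ms 0 * (Δ + ε) * x)⁻¹ →
          ‖f' x‖ < (Δ + ε) * (Ms 0 * (1 - Ms 0 * (Δ + ε) * x)⁻¹)^2 := by
        intro x hx heq
        have hx1 : x ∈ Icc (0:ℝ) 1 := ⟨hx.1, hx.2.le⟩
        have h1 : ‖f' x‖ ≤ Δ * (Ms x)^2 := hf'le x hx1
        have hBx : 0 < Ms 0 * (1 - Ms 0 * (Δ + ε) * x)⁻¹ :=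
          mul_pos hm0 (inv_pos.mpr (hu x hx1))
        have h2 : Ms x ≤ Ms 0 * (1 - Ms 0 * (Δ + ε) * x)⁻¹ := heq ▸ hMle x
        have h3 : (0:ℝ) ≤ Ms x + Ms 0 * (1 - Ms 0 * (Δ + ε) * x)⁻¹ := by
          have := hMs0 x; linarith
        nlinarith [h1, h2, hBx, hΔ0, hε, hMs0 x, mul_pos hε (mul_pos hBx hBx),
          mul_nonneg hΔ0 (mul_nonneg (sub_nonneg.mpr h2) h3)]
      have hfin := image_norm_le_of_norm_deriv_right_lt_deriv_boundary' hcont hfd ha hBcont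
        (fun x hx => (hB' x hx).hasDerivWithinAt) bound (right_mem_Icc.mpr zero_le_one)
      refine le_trans (le_trans (hMle 1) hfin) (le_of_eq ?_)
      norm_num
    -- take the limit ε → 0⁺
    have hε₁ : 0 < (1 - Ms 0 * Δ) / Ms 0 := div_pos (by linarith) hm0
    have hev : ∀ ε ∈ Ioo (0:ℝ) ((1 - Ms 0 * Δ) / Ms 0),
        Ms 1 ≤ Ms 0 * (1 - Ms 0 * (Δ + ε))⁻¹ := by
      intro ε hε
      refine claim ε hε.1 ?_
      have := hε.2
      rw [lt_div_iff₀ hm0] at this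
      nlinarith
    have hne0 : 1 - Ms 0 * (Δ + 0) ≠ 0 := by rw [add_zero]; exact ne_of_gt (by linarith)
    have h1c : ContinuousAt (fun ε : ℝ => 1 - Ms 0 * (Δ + ε)) 0 := by fun_prop
    have hc : ContinuousAt (fun ε : ℝ => Ms 0 * (1 - Ms 0 * (Δ + ε))⁻¹) 0 :=
      continuousAt_const.mul (h1c.inv₀ hne0)
    have htend : Filter.Tendsto (fun ε : ℝ => Ms 0 * (1 - Ms 0 * (Δ + ε))⁻¹)
        (nhdsWithin 0 (Ioi 0)) (nhds (Ms 0 * (1 - Ms 0 * Δ)⁻¹)) := by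
      have := hc.tendsto.mono_left (nhdsWithin_le_nhds (s := Ioi (0:ℝ)))
      simpa using this
    have hfinal : Ms 1 ≤ Ms 0 * (1 - Ms 0 * Δ)⁻¹ :=
      ge_of_tendsto htend (Filter.eventually_of_mem
        (Ioo_mem_nhdsGT_of_mem ⟨le_rfl, hε₁⟩) hev)
    rw [mul_comm] at hfinal
    exact hfinal
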